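/- Let K ∈ ℝ, N ∈ (1,∞), D > 0 (with D ≤ π√((N−1)/K) if K > 0). If h : [0,D] → ℝ is an MCP(K,N)-density with ∫₀ᴰ h(x) dx = 1, then h(x) ≥ f_{K,N,D}(x) for every x ∈ [0,D]. -/

import Mathlib

open MeasureTheory Filter

noncomputable section

/-- The comparison function `s_κ(θ)`:
`sin(√κ·θ)/√κ` if `κ > 0`, `θ` if `κ = 0`, `sinh(√(−κ)·θ)/√(−κ)` if `κ < 0`. -/
def sK (κ θ : ℝ) : ℝ :=
  if 0 < κ then Real.sin (Real.sqrt κ * θ) / Real.sqrt κ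
  else if κ = 0 then θ
  else Real.sinh (Real.sqrt (-κ) * θ) / Real.sqrt (-κ)

/-- `h` is an `MCP(K,N)`-density on the interval `I ⊆ ℝ`: it is a nonnegative Borel
function satisfying
`h(t·x₁+(1−t)·x₀) ≥ (s_{K/(N−1)}((1−t)|x₁−x₀|)/s_{K/(N−1)}(|x₁−x₀|))^{N−1}·h(x₀)`
for all `x₀, x₁ ∈ I`, `t ∈ [0,1]`; when `x₀ = x₁` the coefficient is interpreted as `1−t`,
and when `K > 0` and `|x₁−x₀| ≥ π√((N−1)/K)` the coefficient is `+∞`, forcing `h x₀ = 0`. -/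
def IsMCPDensity (K N : ℝ) (I : Set ℝ) (h : ℝ → ℝ) : Prop :=
  Measurable h ∧ (∀ x ∈ I, 0 ≤ h x) ∧
  ∀ x₀ ∈ I, ∀ x₁ ∈ I, ∀ t ∈ Set.Icc (0:ℝ) 1,
    (x₀ = x₁ → (1 - t) * h x₀ ≤ h x₀) ∧
    (x₀ ≠ x₁ →
      ((0 < K ∧ Real.pi * Real.sqrt ((N - 1) / K) ≤ |x₁ - x₀|) → h x₀ = 0) ∧
      (¬(0 < K ∧ Real.pi * Real.sqrt ((N - 1) / K) ≤ |x₁ - x₀|) →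
        (sK (K / (N - 1)) ((1 - t) * |x₁ - x₀|) / sK (K / (N - 1)) |x₁ - x₀|) ^ (N - 1) * h x₀
          ≤ h (t * x₁ + (1 - t) * x₀)))

/-- `h` is a `CD(K,N)`-density on the interval `I ⊆ ℝ`. -/
def IsCDDensity (K N : ℝ) (I : Set ℝ) (h : ℝ → ℝ) : Prop :=
  (∀ x ∈ I, 0 ≤ h x) ∧
  ∀ x₀ ∈ I, ∀ x₁ ∈ I, x₀ < x₁ → ∀ t ∈ Set.Icc (0:ℝ) 1,
    (sK (K / (N - 1)) ((1 - t) * (x₁ - x₀)) / sK (K / (N - 1)) (x₁ - x₀)) * h x₀ ^ (1 / (N - 1))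
      + (sK (K / (N - 1)) (t * (x₁ - x₀)) / sK (K / (N - 1)) (x₁ - x₀)) * h x₁ ^ (1 / (N - 1))
      ≤ h ((1 - t) * x₀ + t * x₁) ^ (1 / (N - 1))

/-- The lower-bound function `f_{K,N,D}`. -/
def fKND (K N D : ℝ) (x : ℝ) : ℝ :=
  if x = 0 ∨ x = D then 0
  else ((∫ y in (0:ℝ)..x, (sK (K / (N - 1)) (D - y) / sK (K / (N - 1)) (D - x)) ^ (N - 1)) +
        (∫ y in x..D, (sK (K / (N - 1)) y / sK (K / (N - 1)) x) ^ (N - 1)))⁻¹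

/-- The model density `h^a_{K,N,D}`. -/
def hKND (K N D a : ℝ) (x : ℝ) : ℝ :=
  if x ≤ a then fKND K N D a * (sK (K / (N - 1)) (D - x) / sK (K / (N - 1)) (D - a)) ^ (N - 1)
  else fKND K N D a * (sK (K / (N - 1)) x / sK (K / (N - 1)) a) ^ (N - 1)

/-- `v_{K,N,D}(a) = ∫₀ᵃ h^a_{K,N,D}(x) dx`. -/
def vKND (K N D a : ℝ) : ℝ := ∫ x in (0:ℝ)..a, hKND K N D a x

/-- The (outer) Minkowski content of `A` with respect to `μ`:
`liminf_{ε→0⁺} (μ(Aᵉ) − μ(A))/ε` where `Aᵉ` is the open `ε`-neighbourhood of `A`. -/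
def mink (μ : Measure ℝ) (A : Set ℝ) : ℝ :=
  Filter.liminf (fun ε : ℝ => ((μ (Metric.thickening ε A)).toReal - (μ A).toReal) / ε)
    (nhdsWithin 0 (Set.Ioi 0))

/-- The measure `μ_h = h · Leb` restricted to `[0,D]`. -/
def muh (h : ℝ → ℝ) (D : ℝ) : Measure ℝ :=
  (volume.restrict (Set.Icc (0:ℝ) D)).withDensity (fun x => ENNReal.ofReal (h x))

/-- The restricted one-dimensional isoperimetric profile `Ĩ_{K,N,D}(v)` over
`MCP(K,N)`-densities on `[0,D]` integrating to `1`. -/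
def Itilde (K N D v : ℝ) : ℝ :=
  sInf { p : ℝ | ∃ h : ℝ → ℝ, IsMCPDensity K N (Set.Icc 0 D) h ∧
    (∫ x in (0:ℝ)..D, h x) = 1 ∧
    ∃ A : Set ℝ, MeasurableSet A ∧ A ⊆ Set.Icc 0 D ∧ (muh h D A).toReal = v ∧
      p = mink (muh h D) A }

/-- The restricted one-dimensional isoperimetric profile `Ĩ^{CD}_{K,N,D}(v)` over
`CD(K,N)`-densities on `[0,D]` integrating to `1`. -/
def ItildeCD (K N D v : ℝ) : ℝ :=
  sInf { p : ℝ | ∃ h : ℝ → ℝ, IsCDDensity K N (Set.Icc 0 D) h ∧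
    (∫ x in (0:ℝ)..D, h x) = 1 ∧
    ∃ A : Set ℝ, MeasurableSet A ∧ A ⊆ Set.Icc 0 D ∧ (muh h D A).toReal = v ∧
      p = mink (muh h D) A }



lemma sK_pos {κ θ : ℝ} (hθ : 0 < θ) (hκ : 0 < κ → Real.sqrt κ * θ < Real.pi) :
    0 < sK κ θ := by
  unfold sK
  split_ifs with h1 h2
  · exact div_pos (Real.sin_pos_of_pos_of_lt_pi
      (mul_pos (Real.sqrt_pos.2 h1) hθ) (hκ h1)) (Real.sqrt_pos.2 h1)
  · exact hθ
  · have h3 : 0 < -κ := neg_pos.2 (lt_of_le_of_ne (not_lt.1 h1) h2)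
    exact div_pos (Real.sinh_pos_iff.2 (mul_pos (Real.sqrt_pos.2 h3) hθ))
      (Real.sqrt_pos.2 h3)

lemma sK_nonneg {κ θ : ℝ} (hθ : 0 ≤ θ) (hκ : 0 < κ → Real.sqrt κ * θ ≤ Real.pi) :
    0 ≤ sK κ θ := by
  unfold sK
  split_ifs with h1 h2
  · exact div_nonneg (Real.sin_nonneg_of_nonneg_of_le_pi
      (mul_nonneg (Real.sqrt_nonneg κ) hθ) (hκ h1)) (Real.sqrt_nonneg κ)
  · exact hθ
  · exact div_nonneg (Real.sinh_nonneg_iff.2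
      (mul_nonneg (Real.sqrt_nonneg _) hθ)) (Real.sqrt_nonneg _)

lemma sK_continuous (κ : ℝ) : Continuous (sK κ) := by
  unfold sK
  rcases lt_trichotomy κ 0 with hc | hc | hc
  · simp only [if_neg (not_lt.2 hc.le), if_neg hc.ne]
    fun_prop
  · subst hc
    simp
    fun_prop
  · simp only [if_pos hc]
    fun_prop

/-- Proposition (Lower bound), point (iii): any `MCP(K,N)`-density on `[0,D]`
integrating to `1` dominates `f_{K,N,D}` pointwise. -/
theorem fKND_le_mcp_density (K N D : ℝ) (hN : 1 < N) (hD : 0 < D)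
    (hDK : 0 < K → D ≤ Real.pi * Real.sqrt ((N - 1) / K))
    (h : ℝ → ℝ) (hMCP : IsMCPDensity K N (Set.Icc 0 D) h)
    (hint : (∫ x in (0:ℝ)..D, h x) = 1) :
    ∀ x ∈ Set.Icc (0:ℝ) D, fKND K N D x ≤ h x := by
  obtain ⟨hmeas, hnn, hineq⟩ := hMCP
  intro x hx
  rcases eq_or_ne x 0 with rfl | hx0
  · rw [fKND, if_pos (Or.inl rfl)]; exact hnn 0 hx
  rcases eq_or_ne x D with rfl | hxD
  · rw [fKND, if_pos (Or.inr rfl)]; exact hnn _ hx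
  have hx1 : 0 < x := lt_of_le_of_ne hx.1 (Ne.symm hx0)
  have hx2 : x < D := lt_of_le_of_ne hx.2 hxD
  have hN1 : (0:ℝ) < N - 1 := by linarith
  -- basic facts about sqrt
  have hKpos : ∀ _ : 0 < K / (N - 1), 0 < K := by
    intro hκ
    rcases div_pos_iff.1 hκ with ⟨h1, _⟩ | ⟨_, h2⟩
    · exact h1
    · linarith
  have hsqrtπ : ∀ _ : 0 < K,
      Real.sqrt (K / (N - 1)) * (Real.pi * Real.sqrt ((N - 1) / K)) = Real.pi := by
    intro hK
    rw [show Real.sqrt (K / (N - 1)) * (Real.pi * Real.sqrt ((N - 1) / K))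
        = Real.pi * (Real.sqrt (K / (N - 1)) * Real.sqrt ((N - 1) / K)) from by ring,
      ← Real.sqrt_mul (by positivity),
      show K / (N - 1) * ((N - 1) / K) = 1 from by field_simp,
      Real.sqrt_one, mul_one]
  have hposθ : ∀ θ : ℝ, 0 < θ → (0 < K → θ < Real.pi * Real.sqrt ((N - 1) / K)) →
      0 < sK (K / (N - 1)) θ := by
    intro θ h1 h2
    refine sK_pos h1 ?_
    intro hκ
    have hK : 0 < K := hKpos hκ
    calc Real.sqrt (K / (N - 1)) * θ
        < Real.sqrt (K / (N - 1)) * (Real.pi * Real.sqrt ((N - 1) / K)) :=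
          mul_lt_mul_of_pos_left (h2 hK) (Real.sqrt_pos.2 hκ)
      _ = Real.pi := hsqrtπ hK
  have hnnθ : ∀ θ : ℝ, 0 ≤ θ → θ ≤ D → 0 ≤ sK (K / (N - 1)) θ := by
    intro θ h1 h2
    refine sK_nonneg h1 ?_
    intro hκ
    have hK : 0 < K := hKpos hκ
    calc Real.sqrt (K / (N - 1)) * θ
        ≤ Real.sqrt (K / (N - 1)) * (Real.pi * Real.sqrt ((N - 1) / K)) :=
          mul_le_mul_of_nonneg_left (h2.trans (hDK hK)) (Real.sqrt_nonneg _)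
      _ = Real.pi := hsqrtπ hK
  have hsx : 0 < sK (K / (N - 1)) x :=
    hposθ x hx1 fun hK => lt_of_lt_of_le hx2 (hDK hK)
  have hsDx : 0 < sK (K / (N - 1)) (D - x) :=
    hposθ _ (by linarith) fun hK => lt_of_lt_of_le (by linarith) (hDK hK)
  -- pointwise upper bounds
  have H1 : ∀ y ∈ Set.Icc (0:ℝ) x,
      h y ≤ (sK (K / (N - 1)) (D - y) / sK (K / (N - 1)) (D - x)) ^ (N - 1) * h x := by
    intro y hy
    have hyD : y < D := lt_of_le_of_lt hy.2 hx2
    have hyI : y ∈ Set.Icc (0:ℝ) D := ⟨hy.1, hyD.le⟩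
    have hDI : D ∈ Set.Icc (0:ℝ) D := ⟨hD.le, le_rfl⟩
    have hne : y ≠ D := ne_of_lt hyD
    by_cases hA : 0 < K ∧ Real.pi * Real.sqrt ((N - 1) / K) ≤ |D - y|
    · have h0 : h y = 0 :=
        ((hineq y hyI D hDI 0 ⟨le_rfl, zero_le_one⟩).2 hne).1 hA
      rw [h0]
      exact mul_nonneg (Real.rpow_nonneg
        (div_nonneg (hnnθ _ (by linarith [hy.1, hyD]) (by linarith [hy.1])) hsDx.le) _)
        (hnn x hx)
    · have hA' := hA
      push_neg at hA'
      have hDy : 0 < D - y := by linarith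
      set t := (x - y) / (D - y) with htdef
      have ht0 : 0 ≤ t := div_nonneg (by linarith [hy.2]) hDy.le
      have ht1 : t ≤ 1 := (div_le_one hDy).2 (by linarith)
      have hkey := ((hineq y hyI D hDI t ⟨ht0, ht1⟩).2 hne).2 hA
      have habs : |D - y| = D - y := abs_of_nonneg hDy.le
      rw [habs] at hkey
      have h1t : (1 - t) * (D - y) = D - x := by
        rw [htdef, sub_mul, one_mul, div_mul_cancel₀ _ hDy.ne']; ring
      have hpt : t * D + (1 - t) * y = x := by
        linear_combination -h1t
      rw [h1t, hpt] at hkey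
      have hsDy : 0 < sK (K / (N - 1)) (D - y) :=
        hposθ _ hDy fun hK => habs ▸ hA' hK
      set c := (sK (K / (N - 1)) (D - x) / sK (K / (N - 1)) (D - y)) ^ (N - 1) with hcdef
      have hc : 0 < c := Real.rpow_pos_of_pos (div_pos hsDx hsDy) _
      have heq : (sK (K / (N - 1)) (D - y) / sK (K / (N - 1)) (D - x)) ^ (N - 1) = c⁻¹ := by
        rw [hcdef, ← Real.inv_rpow (div_pos hsDx hsDy).le, inv_div]
      rw [heq]
      calc h y = c⁻¹ * (c * h y) := by field_simp
        _ ≤ c⁻¹ * h x := mul_le_mul_of_nonneg_left hkey (inv_nonneg.2 hc.le)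
  have H2 : ∀ y ∈ Set.Icc x D,
      h y ≤ (sK (K / (N - 1)) y / sK (K / (N - 1)) x) ^ (N - 1) * h x := by
    intro y hy
    have hy0 : 0 < y := lt_of_lt_of_le hx1 hy.1
    have hyI : y ∈ Set.Icc (0:ℝ) D := ⟨hy0.le, hy.2⟩
    have h0I : (0:ℝ) ∈ Set.Icc (0:ℝ) D := ⟨le_rfl, hD.le⟩
    have hne : y ≠ 0 := ne_of_gt hy0
    have habs : |(0:ℝ) - y| = y := by rw [zero_sub, abs_neg, abs_of_nonneg hy0.le]
    by_cases hA : 0 < K ∧ Real.pi * Real.sqrt ((N - 1) / K) ≤ |(0:ℝ) - y|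
    · have h0 : h y = 0 :=
        ((hineq y hyI 0 h0I 0 ⟨le_rfl, zero_le_one⟩).2 hne).1 hA
      rw [h0]
      exact mul_nonneg (Real.rpow_nonneg
        (div_nonneg (hnnθ _ hy0.le hy.2) hsx.le) _) (hnn x hx)
    · have hA' := hA
      push_neg at hA'
      set t := (y - x) / y with htdef
      have ht0 : 0 ≤ t := div_nonneg (by linarith [hy.1]) hy0.le
      have ht1 : t ≤ 1 := (div_le_one hy0).2 (by linarith)
      have hkey := ((hineq y hyI 0 h0I t ⟨ht0, ht1⟩).2 hne).2 hA
      rw [habs] at hkey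
      have h1t : (1 - t) * y = x := by
        rw [htdef, sub_mul, one_mul, div_mul_cancel₀ _ hy0.ne']; ring
      rw [h1t, show t * 0 + x = x from by ring] at hkey
      have hsy : 0 < sK (K / (N - 1)) y :=
        hposθ _ hy0 fun hK => habs ▸ hA' hK
      set c := (sK (K / (N - 1)) x / sK (K / (N - 1)) y) ^ (N - 1) with hcdef
      have hc : 0 < c := Real.rpow_pos_of_pos (div_pos hsx hsy) _
      have heq : (sK (K / (N - 1)) y / sK (K / (N - 1)) x) ^ (N - 1) = c⁻¹ := by
        rw [hcdef, ← Real.inv_rpow (div_pos hsx hsy).le, inv_div]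
      rw [heq]
      calc h y = c⁻¹ * (c * h y) := by field_simp
        _ ≤ c⁻¹ * h x := mul_le_mul_of_nonneg_left hkey (inv_nonneg.2 hc.le)
  -- integration
  have hII : IntervalIntegrable h volume 0 D := by
    by_contra hc
    rw [intervalIntegral.integral_undef hc] at hint
    norm_num at hint
  have hII1 : IntervalIntegrable h volume 0 x :=
    hII.mono_set (by
      rw [Set.uIcc_of_le hx1.le, Set.uIcc_of_le hD.le]
      exact Set.Icc_subset_Icc le_rfl hx2.le)
  have hII2 : IntervalIntegrable h volume x D :=
    hII.mono_set (by
      rw [Set.uIcc_of_le hx2.le, Set.uIcc_of_le hD.le]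
      exact Set.Icc_subset_Icc hx1.le le_rfl)
  have hcont1 : Continuous
      (fun y => (sK (K / (N - 1)) (D - y) / sK (K / (N - 1)) (D - x)) ^ (N - 1)) := by
    apply Continuous.rpow_const
    · exact ((sK_continuous _).comp (continuous_const.sub continuous_id)).div_const _
    · intro y; right; linarith
  have hcont2 : Continuous
      (fun y => (sK (K / (N - 1)) y / sK (K / (N - 1)) x) ^ (N - 1)) := by
    apply Continuous.rpow_const
    · exact (sK_continuous _).div_const _
    · intro y; right; linarith
  have hmono1 : (∫ y in (0:ℝ)..x, h y)
      ≤ ∫ y in (0:ℝ)..x,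
        (sK (K / (N - 1)) (D - y) / sK (K / (N - 1)) (D - x)) ^ (N - 1) * h x :=
    intervalIntegral.integral_mono_on hx1.le hII1
      ((hcont1.mul continuous_const).intervalIntegrable _ _) H1
  have hmono2 : (∫ y in x..D, h y)
      ≤ ∫ y in x..D,
        (sK (K / (N - 1)) y / sK (K / (N - 1)) x) ^ (N - 1) * h x :=
    intervalIntegral.integral_mono_on hx2.le hII2
      ((hcont2.mul continuous_const).intervalIntegrable _ _) H2
  have hsplit : (∫ y in (0:ℝ)..x, h y) + (∫ y in x..D, h y) = 1 := by
    rw [intervalIntegral.integral_add_adjacent_intervals hII1 hII2]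
    exact hint
  have he1 : (∫ y in (0:ℝ)..x,
      (sK (K / (N - 1)) (D - y) / sK (K / (N - 1)) (D - x)) ^ (N - 1) * h x)
      = (∫ y in (0:ℝ)..x,
        (sK (K / (N - 1)) (D - y) / sK (K / (N - 1)) (D - x)) ^ (N - 1)) * h x :=
    intervalIntegral.integral_mul_const _ _
  have he2 : (∫ y in x..D,
      (sK (K / (N - 1)) y / sK (K / (N - 1)) x) ^ (N - 1) * h x)
      = (∫ y in x..D, (sK (K / (N - 1)) y / sK (K / (N - 1)) x) ^ (N - 1)) * h x :=
    intervalIntegral.integral_mul_const _ _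
  set I₁ := ∫ y in (0:ℝ)..x, (sK (K / (N - 1)) (D - y) / sK (K / (N - 1)) (D - x)) ^ (N - 1)
  set I₂ := ∫ y in x..D, (sK (K / (N - 1)) y / sK (K / (N - 1)) x) ^ (N - 1)
  have hfinal : 1 ≤ (I₁ + I₂) * h x := by
    rw [add_mul]
    rw [he1] at hmono1
    rw [he2] at hmono2
    linarith
  have hF : 0 < I₁ + I₂ := by
    by_contra hF
    push_neg at hF
    nlinarith [hnn x hx, hfinal, mul_nonneg (neg_nonneg.2 hF) (hnn x hx)]
  rw [fKND, if_neg (by push_neg; exact ⟨hx0, hxD⟩)]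
  rw [inv_eq_one_div]
  exact (div_le_iff₀ hF).2 (le_of_le_of_eq hfinal (mul_comm _ _))


end
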